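/- arXiv:2410.01732 — 2 statements merged into one kernel-verified Lean document; each statement's English description precedes it below -/
import Mathlib

section
/- For any real-valued random variable X with mean μ and variance σ² > 0, and any t ∈ ℝ, the supremum of the target semi-variance E[(X−t)₊²] over all distributions with mean μ and variance σ² equals σ² + ((μ−t)₊)². -/
open MeasureTheory

lemma integrable_dirac' (f : ℝ → ℝ) (a : ℝ) : Integrable f (Measure.dirac a) := by
  have h : f =ᵐ[Measure.dirac a] fun _ => f a := by
    rw [ae_dirac_eq]; exact Filter.eventually_pure.mpr rfl
  exact (integrable_congr h).mpr (integrable_const _)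

lemma two_point (μ σ t q a b : ℝ) (hq0 : 0 ≤ q) (hq1 : q ≤ 1)
    (hmean : (1-q)*a + q*b = μ) (hvar : (1-q)*a^2 + q*b^2 = μ^2+σ^2) :
    ((1-q)*(max (a-t) 0)^2 + q*(max (b-t) 0)^2) ∈
    {y : ℝ | ∃ P : Measure ℝ, IsProbabilityMeasure P ∧ Integrable (fun x => x ^ 2) P ∧
        (∫ x, x ∂P) = μ ∧ (∫ x, x ^ 2 ∂P) = μ ^ 2 + σ ^ 2 ∧
        y = ∫ x, (max (x - t) 0) ^ 2 ∂P} := by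
  set P : Measure ℝ := (ENNReal.ofReal (1-q)) • Measure.dirac a + (ENNReal.ofReal q) • Measure.dirac b with hP
  have hint : ∀ f : ℝ → ℝ, Integrable f P := by
    intro f
    exact ((integrable_dirac' f a).smul_measure ENNReal.ofReal_ne_top).add_measure
      ((integrable_dirac' f b).smul_measure ENNReal.ofReal_ne_top)
  have hI : ∀ f : ℝ → ℝ, (∫ x, f x ∂P) = (1-q) * f a + q * f b := by
    intro f
    rw [hP, integral_add_measure ((integrable_dirac' f a).smul_measure ENNReal.ofReal_ne_top)
      ((integrable_dirac' f b).smul_measure ENNReal.ofReal_ne_top),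
      integral_smul_measure, integral_smul_measure, integral_dirac, integral_dirac,
      ENNReal.toReal_ofReal (by linarith), ENNReal.toReal_ofReal hq0]
    simp [smul_eq_mul]
  refine ⟨P, ?_, hint _, by rw [hI]; simpa using hmean, by rw [hI]; simpa using hvar, (hI (fun x => (max (x - t) 0) ^ 2)).symm⟩
  constructor
  simp only [hP, Measure.add_apply, Measure.smul_apply, Measure.dirac_apply, smul_eq_mul]
  simp only [Set.indicator_univ, Pi.one_apply, mul_one]
  rw [← ENNReal.ofReal_add (by linarith) hq0]
  norm_num

theorem stmt_2 (μ σ t : ℝ) (hσ : 0 < σ) :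
    sSup {y : ℝ | ∃ P : Measure ℝ, IsProbabilityMeasure P ∧ Integrable (fun x => x ^ 2) P ∧
        (∫ x, x ∂P) = μ ∧ (∫ x, x ^ 2 ∂P) = μ ^ 2 + σ ^ 2 ∧
        y = ∫ x, (max (x - t) 0) ^ 2 ∂P}
      = σ ^ 2 + (max (μ - t) 0) ^ 2 := by
  set s : ℝ := min t μ with hs
  apply csSup_eq_of_forall_le_of_forall_lt_exists_gt
  · exact ⟨_, two_point μ σ t (1/2) (μ - σ) (μ + σ) (by norm_num) (by norm_num)
      (by ring) (by ring)⟩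
  · rintro y ⟨P, hprob, hint2, hm, hv, hy⟩
    have hax : AEStronglyMeasurable (fun x : ℝ => x) P :=
      measurable_id.aestronglyMeasurable
    have hintx : Integrable (fun x : ℝ => x) P := by
      refine (hint2.add (integrable_const 1)).mono hax ?_
      filter_upwards with x
      have habs : |x^2 + 1| = x^2 + 1 := abs_of_nonneg (by positivity)
      simp only [Pi.add_apply, Real.norm_eq_abs, habs]
      rw [abs_le]
      constructor <;> nlinarith [sq_nonneg (x-1), sq_nonneg (x+1)]
    have heq : (fun x : ℝ => (x - s)^2) = fun x => x^2 - (2*s)*x + s^2 := by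
      funext x; ring
    have hintsq : Integrable (fun x : ℝ => (x - s)^2) P := by
      rw [heq]; exact (hint2.sub (hintx.const_mul _)).add (integrable_const _)
    have hintm : Integrable (fun x : ℝ => (max (x - t) 0)^2) P := by
      refine hintsq.mono ?_ ?_
      · exact (((continuous_id.sub continuous_const).max continuous_const).pow 2).aestronglyMeasurable
      · filter_upwards with x
        have hst : s ≤ t := min_le_left _ _
        have h1 : 0 ≤ max (x - t) 0 := le_max_right _ _
        have h2 : max (x - t) 0 ≤ |x - s| := by
          rcases le_total (x - t) 0 with h | h
          · rw [max_eq_right h]; positivity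
          · rw [max_eq_left h]; have := le_abs_self (x - s); linarith
        simp only [Real.norm_eq_abs, abs_of_nonneg (sq_nonneg (x - s)),
          abs_of_nonneg (sq_nonneg (max (x - t) 0))]
        nlinarith [mul_le_mul h2 h2 h1 (abs_nonneg (x - s)), sq_abs (x - s)]
    have hle : y ≤ ∫ x, (x - s)^2 ∂P := by
      rw [hy]
      refine integral_mono hintm hintsq ?_
      intro x
      have h1 : 0 ≤ max (x - t) 0 := le_max_right _ _
      have h2 : max (x - t) 0 ≤ |x - s| := by
        rcases le_total (x - t) 0 with h | h
        · rw [max_eq_right h]; positivity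
        · rw [max_eq_left h]
          have hst : s ≤ t := min_le_left _ _
          have := le_abs_self (x - s); linarith
      show ((max (x - t) 0)^2 : ℝ) ≤ (x - s)^2
      nlinarith [mul_le_mul h2 h2 h1 (abs_nonneg (x - s)), sq_abs (x - s)]
    have hcalc : (∫ x, (x - s)^2 ∂P) = μ^2 + σ^2 - 2*s*μ + s^2 := by
      have i1 : Integrable (fun x : ℝ => x^2 - 2*s*x) P := hint2.sub (hintx.const_mul (2*s))
      calc (∫ x, (x - s)^2 ∂P) = ∫ x, (x^2 - 2*s*x + s^2) ∂P := by rw [heq]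
        _ = (∫ x, (x^2 - 2*s*x) ∂P) + ∫ _x, (s^2:ℝ) ∂P := integral_add i1 (integrable_const _)
        _ = ((∫ x, x^2 ∂P) - ∫ x, 2*s*x ∂P) + s^2 := by
              rw [integral_sub hint2 (hintx.const_mul (2*s)), integral_const]
              simp [measure_univ]
        _ = μ^2 + σ^2 - 2*s*μ + s^2 := by rw [integral_const_mul, hm, hv]
    have hfin : μ^2 + σ^2 - 2*s*μ + s^2 = σ^2 + (max (μ - t) 0)^2 := by
      rcases le_total t μ with h | h
      · rw [hs, min_eq_left h, max_eq_left (by linarith)]; ring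
      · rw [hs, min_eq_right h, max_eq_right (by linarith)]; ring
    rw [hcalc] at hle
    linarith [hle, hfin.le, hfin.ge]
  · intro w hw
    rcases lt_or_ge t μ with ht | ht
    · -- attained exactly when t < μ
      have hd0 : 0 < μ - t := by linarith
      have hd : (μ - t) ≠ 0 := ne_of_gt hd0
      have hD0 : 0 < (μ-t)^2 + σ^2 := by positivity
      have hD : ((μ-t)^2 + σ^2) ≠ 0 := ne_of_gt hD0
      refine ⟨_, two_point μ σ t ((μ-t)^2/((μ-t)^2+σ^2)) t (μ + σ^2/(μ-t))
        (by positivity) ((div_le_one hD0).mpr (by nlinarith)) ?_ ?_, ?_⟩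
      · field_simp; ring
      · field_simp; ring
      · have h1 : max (t - t) 0 = 0 := by simp
        have hσd : 0 < σ^2/(μ-t) := by positivity
        have h2 : max (μ + σ^2/(μ-t) - t) 0 = (μ - t) + σ^2/(μ-t) := by
          rw [max_eq_left (by linarith)]; ring
        rw [h1, h2]
        have hval : (1 - (μ-t)^2/((μ-t)^2+σ^2))*(0:ℝ)^2
            + ((μ-t)^2/((μ-t)^2+σ^2))*((μ - t) + σ^2/(μ-t))^2 = σ^2 + (μ-t)^2 := by
          field_simp; ring
        rw [hval]
        have hmx : max (μ - t) 0 = μ - t := max_eq_left hd0.le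
        rw [hmx] at hw; linarith
    · -- t ≥ μ : approach σ^2
      have hmax : max (μ - t) 0 = 0 := max_eq_right (by linarith)
      rw [hmax] at hw
      have hw' : w < σ^2 := by nlinarith
      have he0 : (0:ℝ) ≤ t - μ := by linarith
      obtain ⟨u, hu1, hval⟩ : ∃ u : ℝ, 1 ≤ u ∧ w * (σ^2 + (u+(t-μ))^2) < σ^2 * u^2 := by
        rcases lt_or_ge w 0 with hw0 | hw0
        · exact ⟨1, le_refl _, by nlinarith⟩
        · have hsw : 0 < σ^2 - w := by linarith
          refine ⟨max 1 ((2*w*(t-μ) + w*((t-μ)^2+σ^2) + 1)/(σ^2 - w)), le_max_left _ _, ?_⟩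
          have h1 : 1 ≤ max 1 ((2*w*(t-μ) + w*((t-μ)^2+σ^2) + 1)/(σ^2 - w)) := le_max_left _ _
          have h2 : (2*w*(t-μ) + w*((t-μ)^2+σ^2) + 1)/(σ^2 - w)
              ≤ max 1 ((2*w*(t-μ) + w*((t-μ)^2+σ^2) + 1)/(σ^2 - w)) := le_max_right _ _
          generalize hgu : max 1 ((2*w*(t-μ) + w*((t-μ)^2+σ^2) + 1)/(σ^2 - w)) = u at h1 h2
          have h3 : 2*w*(t-μ) + w*((t-μ)^2+σ^2) + 1 ≤ u * (σ^2 - w) := by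
            rw [div_le_iff₀ hsw] at h2; linarith
          nlinarith [mul_le_mul_of_nonneg_left h3 (by linarith : (0:ℝ) ≤ u),
            mul_nonneg (mul_nonneg hw0 (by positivity : (0:ℝ) ≤ (t-μ)^2 + σ^2))
              (by linarith : (0:ℝ) ≤ u - 1)]
      have hue : 0 < u + (t-μ) := by linarith
      have hue' : (u + (t-μ)) ≠ 0 := ne_of_gt hue
      have hS0 : 0 < σ^2 + (u+(t-μ))^2 := by positivity
      have hS : (σ^2 + (u+(t-μ))^2) ≠ 0 := ne_of_gt hS0
      refine ⟨_, two_point μ σ t (σ^2/(σ^2+(u+(t-μ))^2)) (μ - σ^2/(u+(t-μ))) (t+u)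
        (by positivity) ((div_le_one hS0).mpr (by nlinarith)) ?_ ?_, ?_⟩
      · field_simp; ring
      · field_simp; ring
      · have hpos : 0 < σ^2/(u+(t-μ)) := by positivity
        have h1 : max (μ - σ^2/(u+(t-μ)) - t) 0 = 0 := max_eq_right (by linarith)
        have h2 : max (t + u - t) 0 = u := by
          rw [show t + u - t = u by ring, max_eq_left (by linarith)]
        rw [h1, h2]
        have hval2 : (1 - σ^2/(σ^2+(u+(t-μ))^2))*(0:ℝ)^2
            + (σ^2/(σ^2+(u+(t-μ))^2))*u^2 = σ^2*u^2 / (σ^2+(u+(t-μ))^2) := by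
          field_simp; ring
        rw [hval2, lt_div_iff₀ hS0]
        linarith
end

section
/- Let μ, t ∈ ℝ, σ > 0, λ > 0 with λ ≥ (μ−t)₋, and let 𝓛_λ(μ,σ) be the set of distributions F with mean μ, variance σ², and E^F[(X−t)₋] ≤ λ. Then sup over F ∈ 𝓛_λ(μ,σ) of E^F[(X−t)₊²] equals σ² + ((μ−t)₊)² if λ > (μ−t)₋, and equals 0 if λ = (μ−t)₋. -/
set_option maxHeartbeats 1000000
open MeasureTheory

noncomputable def tp (a b p : ℝ) : Measure ℝ :=
  ENNReal.ofReal p • Measure.dirac a + ENNReal.ofReal (1-p) • Measure.dirac b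

lemma tp_prob (a b p : ℝ) (h0 : 0 ≤ p) (h1 : p ≤ 1) : IsProbabilityMeasure (tp a b p) := by
  constructor
  simp [tp, ← ENNReal.ofReal_add h0 (by linarith : (0:ℝ) ≤ 1 - p)]

lemma tp_integrable (f : ℝ → ℝ) (a b p : ℝ) : Integrable f (tp a b p) := by
  have h1 : Integrable f (Measure.dirac a) :=
    (integrable_const (f a)).congr (ae_eq_dirac f).symm
  have h2 : Integrable f (Measure.dirac b) :=
    (integrable_const (f b)).congr (ae_eq_dirac f).symm
  exact (h1.smul_measure ENNReal.ofReal_ne_top).add_measure (h2.smul_measure ENNReal.ofReal_ne_top)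

lemma tp_integral (f : ℝ → ℝ) (a b p : ℝ) (h0 : 0 ≤ p) (h1 : p ≤ 1) :
    ∫ x, f x ∂(tp a b p) = p * f a + (1-p) * f b := by
  have h1' : Integrable f (Measure.dirac a) :=
    (integrable_const (f a)).congr (ae_eq_dirac f).symm
  have h2' : Integrable f (Measure.dirac b) :=
    (integrable_const (f b)).congr (ae_eq_dirac f).symm
  rw [tp, integral_add_measure (h1'.smul_measure ENNReal.ofReal_ne_top)
    (h2'.smul_measure ENNReal.ofReal_ne_top), integral_smul_measure, integral_smul_measure,
    integral_dirac, integral_dirac, ENNReal.toReal_ofReal h0,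
    ENNReal.toReal_ofReal (by linarith : (0:ℝ) ≤ 1 - p)]
  simp [smul_eq_mul]

lemma mem_S (μ σ t lam a b p : ℝ) (h0 : 0 ≤ p) (h1 : p ≤ 1)
    (hmean : p * a + (1 - p) * b = μ)
    (hsec : p * a ^ 2 + (1 - p) * b ^ 2 = μ ^ 2 + σ ^ 2)
    (hcon : p * max (t - a) 0 + (1 - p) * max (t - b) 0 ≤ lam) :
    (p * (max (a - t) 0) ^ 2 + (1 - p) * (max (b - t) 0) ^ 2) ∈
      {y : ℝ | ∃ P : Measure ℝ, IsProbabilityMeasure P ∧ Integrable (fun x => x ^ 2) P ∧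
        (∫ x, x ∂P) = μ ∧ (∫ x, x ^ 2 ∂P) = μ ^ 2 + σ ^ 2 ∧
        (∫ x, max (t - x) 0 ∂P) ≤ lam ∧
        y = ∫ x, (max (x - t) 0) ^ 2 ∂P} := by
  refine ⟨tp a b p, tp_prob a b p h0 h1, tp_integrable _ a b p, ?_, ?_, ?_, ?_⟩
  · rw [tp_integral (fun x => x) a b p h0 h1]; exact hmean
  · rw [tp_integral (fun x => x ^ 2) a b p h0 h1]; exact hsec
  · rw [tp_integral (fun x => max (t - x) 0) a b p h0 h1]; exact hcon
  · rw [tp_integral (fun x => (max (x - t) 0) ^ 2) a b p h0 h1]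

lemma upper_bd (μ σ t : ℝ) (P : Measure ℝ) (hP : IsProbabilityMeasure P)
    (h2 : Integrable (fun x => x ^ 2) P) (hm : (∫ x, x ∂P) = μ)
    (hv : (∫ x, x ^ 2 ∂P) = μ ^ 2 + σ ^ 2) :
    (∫ x, (max (x - t) 0) ^ 2 ∂P) ≤ σ ^ 2 + (max (μ - t) 0) ^ 2 := by
  set c := min μ t with hc
  have h1 : Integrable (fun x : ℝ => x) P := by
    refine ((integrable_const (1:ℝ)).add h2).mono' measurable_id.aestronglyMeasurable
      (ae_of_all _ fun x => ?_)
    simp only [Pi.add_apply, Real.norm_eq_abs]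
    nlinarith [sq_nonneg (|x| - 1), sq_abs x, abs_nonneg x]
  have hA : Integrable (fun x : ℝ => x ^ 2 - 2 * c * x) P := h2.sub (h1.const_mul (2*c))
  have hint : Integrable (fun x : ℝ => (x - c) ^ 2) P := by
    have he : (fun x : ℝ => (x - c) ^ 2) = fun x => x ^ 2 - 2 * c * x + c ^ 2 := by
      funext x; ring
    rw [he]
    exact hA.add (integrable_const _)
  have hct : c ≤ t := min_le_right μ t
  have hpt : ∀ x : ℝ, (max (x - t) 0) ^ 2 ≤ (x - c) ^ 2 := by
    intro x
    rcases le_total x t with h | h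
    · simp [max_eq_right (by linarith : x - t ≤ 0)]; positivity
    · rw [max_eq_left (by linarith : (0:ℝ) ≤ x - t)]
      nlinarith
  have hmono : (∫ x, (max (x - t) 0) ^ 2 ∂P) ≤ ∫ x, (x - c) ^ 2 ∂P :=
    integral_mono_of_nonneg (ae_of_all _ fun x => by positivity) hint (ae_of_all _ hpt)
  have hval : (∫ x, (x - c) ^ 2 ∂P) = σ ^ 2 + (μ - c) ^ 2 := by
    have he : (fun x : ℝ => (x - c) ^ 2) = fun x => x ^ 2 - 2 * c * x + c ^ 2 := by
      funext x; ring
    rw [he, integral_add hA (integrable_const _), integral_sub h2 (h1.const_mul (2*c)),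
      integral_const_mul, hm, hv, integral_const]
    simp [measure_univ]
    ring
  have hmc : μ - c = max (μ - t) 0 := by
    rcases le_total μ t with h | h
    · simp [hc, min_eq_left h, max_eq_right (by linarith : μ - t ≤ 0)]
    · simp [hc, min_eq_right h, max_eq_left (by linarith : (0:ℝ) ≤ μ - t)]
  calc (∫ x, (max (x - t) 0) ^ 2 ∂P) ≤ σ ^ 2 + (μ - c) ^ 2 := hval ▸ hmono
    _ = σ ^ 2 + (max (μ - t) 0) ^ 2 := by rw [hmc]

theorem stmt_6 (μ σ t lam : ℝ) (hσ : 0 < σ) (hlam : 0 < lam)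
    (hlam' : max (t - μ) 0 ≤ lam) :
    sSup {y : ℝ | ∃ P : Measure ℝ, IsProbabilityMeasure P ∧ Integrable (fun x => x ^ 2) P ∧
        (∫ x, x ∂P) = μ ∧ (∫ x, x ^ 2 ∂P) = μ ^ 2 + σ ^ 2 ∧
        (∫ x, max (t - x) 0 ∂P) ≤ lam ∧
        y = ∫ x, (max (x - t) 0) ^ 2 ∂P}
      = if max (t - μ) 0 < lam then σ ^ 2 + (max (μ - t) 0) ^ 2 else 0 := by
  set S := {y : ℝ | ∃ P : Measure ℝ, IsProbabilityMeasure P ∧ Integrable (fun x => x ^ 2) P ∧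
        (∫ x, x ∂P) = μ ∧ (∫ x, x ^ 2 ∂P) = μ ^ 2 + σ ^ 2 ∧
        (∫ x, max (t - x) 0 ∂P) ≤ lam ∧
        y = ∫ x, (max (x - t) 0) ^ 2 ∂P} with hS
  have hub : ∀ y ∈ S, y ≤ σ ^ 2 + (max (μ - t) 0) ^ 2 := by
    rintro y ⟨P, hP, h2, hm, hv, _, rfl⟩
    exact upper_bd μ σ t P hP h2 hm hv
  have hbdd : BddAbove S := ⟨_, hub⟩
  by_cases hcond : max (t - μ) 0 < lam
  · rw [if_pos hcond]
    rcases lt_or_ge t μ with hμt | hμt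
    · -- attained case: two-point at t and b
      set d : ℝ := (μ - t) + σ ^ 2 / (μ - t) with hd
      have hμt' : 0 < μ - t := by linarith
      have hdpos : 0 < d := by positivity
      set p : ℝ := 1 - (μ - t) / d with hp
      have hfrac : (μ - t) / d ≤ 1 := by
        rw [div_le_one hdpos, hd]
        have := div_nonneg (sq_nonneg σ) hμt'.le
        linarith
      have hfrac0 : 0 < (μ - t) / d := div_pos hμt' hdpos
      have h0 : 0 ≤ p := by simp [hp]; linarith
      have h1 : p ≤ 1 := by simp [hp]; linarith
      have key : (1 - p) * d = μ - t := by
        simp [hp]; field_simp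
      have hmem := mem_S μ σ t lam t (t + d) p h0 h1 ?_ ?_ ?_
      · have hval : p * (max (t - t) 0) ^ 2 + (1 - p) * (max (t + d - t) 0) ^ 2
            = σ ^ 2 + (max (μ - t) 0) ^ 2 := by
          rw [max_eq_left (by linarith : (0:ℝ) ≤ μ - t)]
          have h3 : max (t - t) 0 = 0 := by simp
          have h4 : max (t + d - t) 0 = d := by rw [max_eq_left]; ring_nf; linarith
          rw [h3, h4]
          have : (1 - p) * d ^ 2 = (μ - t) * d := by rw [pow_two, ← mul_assoc, key]
          rw [hd] at this ⊢
          field_simp at this ⊢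
          nlinarith [this]
        rw [hval] at hmem
        exact le_antisymm (csSup_le ⟨_, hmem⟩ hub) (le_csSup hbdd hmem)
      · -- mean
        have : p * t + (1 - p) * (t + d) = t + (1 - p) * d := by ring
        rw [this, key]; ring
      · -- second moment
        have : p * t ^ 2 + (1 - p) * (t + d) ^ 2 = t ^ 2 + 2 * t * ((1-p)*d) + ((1-p)*d) * d := by
          ring
        rw [this, key, hd]
        field_simp
        ring
      · -- constraint
        have h3 : max (t - t) 0 = 0 := by simp
        have h4 : max (t - (t + d)) 0 = 0 := by rw [max_eq_right]; linarith
        rw [h3, h4]; simpa using hlam.le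
    · -- limiting case: sup = σ^2, max (μ - t) 0 = 0
      have hmax : max (μ - t) 0 = 0 := max_eq_right (by linarith)
      rw [hmax]
      have htμ : max (t - μ) 0 = t - μ := max_eq_left (by linarith)
      rw [htμ] at hcond
      have hmem : ∀ s : ℝ, 0 < s → s * (t - μ) ≤ σ → σ * s ≤ lam - (t - μ) →
          ((σ - s * (t - μ)) ^ 2 / (1 + s ^ 2)) ∈ S := by
        intro s hs h1s h2s
        have hps : (0:ℝ) < 1 + s ^ 2 := by positivity
        set a : ℝ := μ - σ * s with ha
        set b : ℝ := μ + σ / s with hb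
        set p : ℝ := 1 / (1 + s ^ 2) with hp
        have h0 : 0 ≤ p := by positivity
        have h1 : p ≤ 1 := by rw [hp, div_le_one hps]; nlinarith
        have hbt : t ≤ b := by
          rw [hb]
          rw [← sub_le_iff_le_add']
          rw [le_div_iff₀ hs]; linarith [mul_comm s (t - μ) ▸ h1s]
        have hat : a ≤ t := by rw [ha]; nlinarith
        have hmm := mem_S μ σ t lam a b p h0 h1 ?_ ?_ ?_
        · have : p * (max (a - t) 0) ^ 2 + (1 - p) * (max (b - t) 0) ^ 2
              = (σ - s * (t - μ)) ^ 2 / (1 + s ^ 2) := by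
            rw [max_eq_right (by linarith : a - t ≤ 0), max_eq_left (by linarith : 0 ≤ b - t)]
            rw [hp, hb]
            field_simp
            ring
          rwa [this] at hmm
        · rw [hp, ha, hb]; field_simp; ring
        · rw [hp, ha, hb]; field_simp; ring
        · rw [max_eq_left (by linarith : 0 ≤ t - a), max_eq_right (by linarith : t - b ≤ 0)]
          rw [hp, ha]
          have hnum : 0 ≤ t - (μ - σ * s) := by linarith
          have he : 1 / (1 + s ^ 2) * (t - (μ - σ * s)) + (1 - 1 / (1 + s ^ 2)) * 0
              = (t - μ + σ * s) / (1 + s ^ 2) := by field_simp; ring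
          rw [he]
          have hle : (t - μ + σ * s) / (1 + s ^ 2) ≤ t - μ + σ * s := by
            rw [div_le_iff₀ hps]; nlinarith
          linarith
      have hf : Filter.Tendsto (fun s : ℝ => (σ - s * (t - μ)) ^ 2 / (1 + s ^ 2))
          (nhdsWithin 0 (Set.Ioi 0)) (nhds (σ ^ 2)) := by
        have hc : ContinuousAt (fun s : ℝ => (σ - s * (t - μ)) ^ 2 / (1 + s ^ 2)) 0 := by
          apply ContinuousAt.div
          · fun_prop
          · fun_prop
          · norm_num
        have h0 : (fun s : ℝ => (σ - s * (t - μ)) ^ 2 / (1 + s ^ 2)) 0 = σ ^ 2 := by norm_num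
        exact h0 ▸ hc.continuousWithinAt.tendsto
      have hε : 0 < min (σ / (t - μ + 1)) ((lam - (t - μ)) / σ) := by
        apply lt_min
        · exact div_pos hσ (by linarith)
        · exact div_pos (by linarith) hσ
      have hev : ∀ᶠ s in nhdsWithin (0:ℝ) (Set.Ioi 0),
          ((σ - s * (t - μ)) ^ 2 / (1 + s ^ 2)) ∈ S := by
        filter_upwards [Ioc_mem_nhdsGT_of_mem (Set.mem_Ico.2 ⟨le_rfl, hε⟩)] with s hs
        obtain ⟨hs0, hs1⟩ := hs
        have hc1 : s * (t - μ) ≤ σ := by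
          have h2' := le_trans hs1 (min_le_left _ _)
          have h2 : s * (t - μ + 1) ≤ σ := by
            rw [← le_div_iff₀ (by linarith : (0:ℝ) < t - μ + 1)]
            exact h2'
          nlinarith
        have hc2 : σ * s ≤ lam - (t - μ) := by
          have h2' := le_trans hs1 (min_le_right _ _)
          rw [← le_div_iff₀' hσ]
          exact h2'
        exact hmem s hs0 hc1 hc2
      have hlow : σ ^ 2 ≤ sSup S :=
        le_of_tendsto hf (hev.mono fun s hs => le_csSup hbdd hs)
      have hne : S.Nonempty := by
        obtain ⟨s, hs⟩ := hev.exists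
        exact ⟨_, hs⟩
      have hup : sSup S ≤ σ ^ 2 := by
        apply csSup_le hne
        intro y hy
        have := hub y hy
        rw [hmax] at this; simpa using this
      linarith [le_antisymm hup hlow]
  · rw [if_neg hcond]
    push_neg at hcond
    have heq : max (t - μ) 0 = lam := le_antisymm hlam' hcond
    have htμ : t - μ = lam := by
      rcases max_cases (t - μ) 0 with ⟨h1, h2⟩ | ⟨h1, h2⟩
      · rw [h1] at heq; exact heq
      · rw [h1] at heq; linarith
    have hμt : μ < t := by linarith
    -- every element is 0
    have hzero : ∀ y ∈ S, y = 0 := by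
      rintro y ⟨P, hP, h2, hm, hv, hcons, rfl⟩
      have h1 : Integrable (fun x : ℝ => x) P := by
        refine ((integrable_const (1:ℝ)).add h2).mono' measurable_id.aestronglyMeasurable
          (ae_of_all _ fun x => ?_)
        simp only [Pi.add_apply, Real.norm_eq_abs]
        nlinarith [sq_nonneg (|x| - 1), sq_abs x, abs_nonneg x]
      have hmaxint : Integrable (fun x : ℝ => max (t - x) 0) P := by
        refine ((integrable_const |t|).add h1.abs).mono'
          (((continuous_const.sub continuous_id).max continuous_const).measurable.aestronglyMeasurable)
          (ae_of_all _ fun x => ?_)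
        simp only [Pi.add_apply, Real.norm_eq_abs]
        rw [abs_of_nonneg (le_max_right _ _)]
        rcases le_total (t - x) 0 with h | h
        · rw [max_eq_right h]; positivity
        · rw [max_eq_left h]
          calc t - x ≤ |t - x| := le_abs_self _
            _ ≤ |t| + |x| := abs_sub _ _
      have htx : Integrable (fun x : ℝ => t - x) P := (integrable_const t).sub h1
      have hg : Integrable (fun x : ℝ => max (t - x) 0 - (t - x)) P := hmaxint.sub htx
      have hgnn : ∀ x : ℝ, 0 ≤ max (t - x) 0 - (t - x) := fun x => by
        have := le_max_left (t - x) (0:ℝ); linarith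
      have hgint : ∫ x, (max (t - x) 0 - (t - x)) ∂P ≤ 0 := by
        rw [integral_sub hmaxint htx, integral_sub (integrable_const t) h1, integral_const, hm]
        simp only [measure_univ, ENNReal.toReal_one, probReal_univ, smul_eq_mul, one_mul]
        linarith [hcons]
      have hgz : ∫ x, (max (t - x) 0 - (t - x)) ∂P = 0 :=
        le_antisymm hgint (integral_nonneg hgnn)
      have hae : (fun x : ℝ => max (t - x) 0 - (t - x)) =ᵐ[P] 0 :=
        (integral_eq_zero_iff_of_nonneg_ae (ae_of_all _ hgnn) hg).mp hgz
      have hae2 : (fun x : ℝ => (max (x - t) 0) ^ 2) =ᵐ[P] 0 := by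
        filter_upwards [hae] with x hx
        simp only [Pi.zero_apply] at hx ⊢
        have hmx : max (x - t) 0 = max (t - x) 0 - (t - x) := by
          rcases le_total x t with h | h
          · rw [max_eq_right (by linarith : x - t ≤ 0), max_eq_left (by linarith : 0 ≤ t - x)]
            ring
          · rw [max_eq_left (by linarith : 0 ≤ x - t), max_eq_right (by linarith : t - x ≤ 0)]
            ring
        rw [hmx, hx]; ring
      rw [integral_congr_ae hae2]; simp
    -- 0 ∈ S
    have ht : t = μ + lam := by linarith
    subst ht
    have hD : (0:ℝ) < lam ^ 2 + σ ^ 2 := by positivity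
    have h0mem : (0:ℝ) ∈ S := by
      have hmm := mem_S μ σ (μ + lam) lam (μ - σ ^ 2 / lam) (μ + lam)
        (lam ^ 2 / (lam ^ 2 + σ ^ 2)) (by positivity)
        (by rw [div_le_one hD]; nlinarith) ?_ ?_ ?_
      · have hz : lam ^ 2 / (lam ^ 2 + σ ^ 2) * (max (μ - σ ^ 2 / lam - (μ + lam)) 0) ^ 2
            + (1 - lam ^ 2 / (lam ^ 2 + σ ^ 2)) * (max (μ + lam - (μ + lam)) 0) ^ 2 = 0 := by
          rw [max_eq_right (by nlinarith [div_pos (by positivity : (0:ℝ) < σ^2) hlam] :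
              μ - σ ^ 2 / lam - (μ + lam) ≤ 0),
            max_eq_right (by linarith : μ + lam - (μ + lam) ≤ 0)]
          ring
        rwa [hz] at hmm
      · field_simp; ring
      · field_simp; ring
      · have hmx1 : max (μ + lam - (μ - σ ^ 2 / lam)) 0 = lam + σ ^ 2 / lam := by
          rw [max_eq_left (by nlinarith [div_pos (by positivity : (0:ℝ) < σ^2) hlam] :
            (0:ℝ) ≤ μ + lam - (μ - σ ^ 2 / lam))]
          ring
        have hmx2 : max (μ + lam - (μ + lam)) 0 = 0 := by
          rw [max_eq_right (by linarith : μ + lam - (μ + lam) ≤ 0)]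
        rw [hmx1, hmx2]
        have he : lam ^ 2 / (lam ^ 2 + σ ^ 2) * (lam + σ ^ 2 / lam)
            + (1 - lam ^ 2 / (lam ^ 2 + σ ^ 2)) * 0 = lam := by
          field_simp
          ring
        linarith [he]
    exact le_antisymm (csSup_le ⟨0, h0mem⟩ fun y hy => (hzero y hy).le)
      (le_csSup hbdd h0mem)
end
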